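/- Let K ⊆ ℝ^(n+m) be a compact regular partially convex set, meaning K is closed, each slice K_y is convex with nonempty interior in ℝ^n, and the map y ↦ int(K_y) is lower hemicontinuous on Y = π_Y(K). If f is a continuous function on K that is affine in x for each fixed y, then there exist unique continuous functions c₀, c₁, …, c_n : Y → ℝ such that f(x,y) = c₀(y) + Σ_{i=1}^n cᵢ(y)xᵢ for all (x,y) ∈ K. -/

import Mathlib

open Filter Metric Set

lemma single_mem_ball {n : ℕ} (x₀ : Fin n → ℝ) {δ s : ℝ} (i : Fin n) (hs : |s| ≤ δ) :
    x₀ + Pi.single i s ∈ Metric.closedBall x₀ δ := by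
  have : dist (x₀ + Pi.single i s) x₀ = ‖(Pi.single i s : Fin n → ℝ)‖ := by
    simp [dist_eq_norm]
  rw [Metric.mem_closedBall, this, Pi.norm_single, Real.norm_eq_abs]
  exact hs

lemma sum_single_mul {n : ℕ} (a : Fin n → ℝ) (i : Fin n) (t : ℝ) :
    ∑ j, a j * (Pi.single i t : Fin n → ℝ) j = a i * t := by
  classical
  rw [Finset.sum_eq_single i]
  · simp
  · intro b _ hb; simp [Pi.single_apply, hb]
  · intro h; exact absurd (Finset.mem_univ i) h

lemma slice_rep {n : ℕ} (S : Set (Fin n → ℝ)) (g : (Fin n → ℝ) → ℝ)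
    (haff : ∀ a b, a ∈ S → b ∈ S → ∀ t ∈ Set.Icc (0:ℝ) 1,
      g (t • a + (1 - t) • b) = t * g a + (1 - t) * g b)
    (x₀ : Fin n → ℝ) (δ : ℝ) (hδ : 0 < δ) (hball : Metric.closedBall x₀ δ ⊆ S) :
    ∀ x ∈ S, g x = g x₀ + ∑ i, ((g (x₀ + Pi.single i δ) - g x₀) / δ) * (x i - x₀ i) := by
  classical
  have hx₀S : x₀ ∈ S := hball (Metric.mem_closedBall_self hδ.le)
  -- midpoint identity
  have hmid : ∀ a b, a ∈ S → b ∈ S → g a + g b = 2 * g ((1/2 : ℝ) • a + (1/2 : ℝ) • b) := by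
    intro a b ha hb
    have h := haff a b ha hb (1/2) (by norm_num)
    have : (1 - (1:ℝ)/2) = 1/2 := by norm_num
    rw [this] at h
    rw [h]; ring
  -- additivity
  have hadd : ∀ u v : Fin n → ℝ, x₀ + u ∈ Metric.closedBall x₀ δ →
      x₀ + v ∈ Metric.closedBall x₀ δ → x₀ + (u + v) ∈ Metric.closedBall x₀ δ →
      g (x₀ + (u + v)) = g (x₀ + u) + g (x₀ + v) - g x₀ := by
    intro u v hu hv huv
    have h1 := hmid (x₀ + (u + v)) x₀ (hball huv) hx₀S
    have h2 := hmid (x₀ + u) (x₀ + v) (hball hu) (hball hv)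
    have heq : (1/2 : ℝ) • (x₀ + (u + v)) + (1/2 : ℝ) • x₀
        = (1/2 : ℝ) • (x₀ + u) + (1/2 : ℝ) • (x₀ + v) := by
      module
    rw [heq] at h1
    linarith [h1, h2]
  -- negation
  have hneg : ∀ v : Fin n → ℝ, x₀ + v ∈ Metric.closedBall x₀ δ →
      x₀ + (-v) ∈ Metric.closedBall x₀ δ → g (x₀ + (-v)) = 2 * g x₀ - g (x₀ + v) := by
    intro v hv hnv
    have h := hmid (x₀ + v) (x₀ + (-v)) (hball hv) (hball hnv)
    have heq : (1/2 : ℝ) • (x₀ + v) + (1/2 : ℝ) • (x₀ + (-v)) = x₀ := by module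
    rw [heq] at h
    linarith
  -- scaling along a point in S
  have hscale : ∀ v : Fin n → ℝ, x₀ + v ∈ S → ∀ t : ℝ, 0 ≤ t → t ≤ 1 →
      g (x₀ + t • v) = (1 - t) * g x₀ + t * g (x₀ + v) := by
    intro v hv t ht0 ht1
    have h := haff (x₀ + v) x₀ hv hx₀S t ⟨ht0, ht1⟩
    have heq : t • (x₀ + v) + (1 - t) • x₀ = x₀ + t • v := by module
    rw [heq] at h
    rw [h]; ring
  -- single-coordinate identity
  have hsingle : ∀ (i : Fin n) (s : ℝ), |s| ≤ δ →
      g (x₀ + Pi.single i s) = g x₀ + (s / δ) * (g (x₀ + Pi.single i δ) - g x₀) := by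
    have hpos : ∀ (i : Fin n) (s : ℝ), 0 ≤ s → s ≤ δ →
        g (x₀ + Pi.single i s) = g x₀ + (s / δ) * (g (x₀ + Pi.single i δ) - g x₀) := by
      intro i s hs0 hsδ
      have hδmem : x₀ + Pi.single i δ ∈ S :=
        hball (single_mem_ball x₀ i (by rw [abs_of_nonneg hδ.le]))
      have h := hscale (Pi.single i δ) hδmem (s/δ) (div_nonneg hs0 hδ.le)
        (div_le_one_of_le₀ hsδ hδ.le)
      have heq : (s/δ) • (Pi.single i δ : Fin n → ℝ) = Pi.single i s := by
        rw [← Pi.single_smul]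
        congr 1
        rw [smul_eq_mul, div_mul_cancel₀ s hδ.ne']
      rw [heq] at h
      rw [h]; ring
    intro i s hs
    rcases le_or_gt 0 s with h0 | h0
    · exact hpos i s h0 (le_of_abs_le hs |>.trans_eq rfl)
    · have hmem1 : x₀ + Pi.single i (-s) ∈ Metric.closedBall x₀ δ :=
        single_mem_ball x₀ i (by rwa [abs_neg])
      have hmem2 : x₀ + Pi.single i s ∈ Metric.closedBall x₀ δ := single_mem_ball x₀ i hs
      have hneg' := hneg (Pi.single i (-s)) hmem1 (by
        have : -(Pi.single i (-s) : Fin n → ℝ) = Pi.single i s := by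
          rw [← Pi.single_neg]; ring_nf
        rw [this]; exact hmem2)
      have hval := hpos i (-s) (by linarith) (by rw [abs_of_neg h0] at hs; linarith)
      have hre : -(Pi.single i (-s) : Fin n → ℝ) = Pi.single i s := by
        rw [← Pi.single_neg]; ring_nf
      rw [hre] at hneg'
      rw [hneg', hval]; ring
  -- local representation on the ball
  have hloc : ∀ v : Fin n → ℝ, ‖v‖ ≤ δ →
      g (x₀ + v) = g x₀ + ∑ i, (v i / δ) * (g (x₀ + Pi.single i δ) - g x₀) := by
    have key : ∀ s : Finset (Fin n), ∀ v : Fin n → ℝ, ‖v‖ ≤ δ → (∀ i, i ∉ s → v i = 0) →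
        g (x₀ + v) = g x₀ + ∑ i ∈ s, (v i / δ) * (g (x₀ + Pi.single i δ) - g x₀) := by
      intro s
      induction s using Finset.induction_on with
      | empty =>
        intro v hv hsupp
        have : v = 0 := funext fun i => hsupp i (Finset.notMem_empty i)
        simp [this]
      | insert _ _ hnotmem ih =>
        rename_i i s
        intro v hv hsupp
        set v' : Fin n → ℝ := Function.update v i 0 with hv'def
        have hdecomp : v = v' + Pi.single i (v i) := by
          funext j
          by_cases h : j = i
          · subst h; simp [hv'def, Function.update, Pi.single_apply]
          · simp [hv'def, Function.update, h, Pi.single_apply]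
        have hvi : |v i| ≤ δ := by
          calc |v i| = ‖v i‖ := rfl
          _ ≤ ‖v‖ := norm_le_pi_norm v i
          _ ≤ δ := hv
        have hv'le : ‖v'‖ ≤ δ := by
          apply (pi_norm_le_iff_of_nonneg hδ.le).mpr
          intro j
          by_cases h : j = i
          · subst h; simp [hv'def]; exact hδ.le
          · simp only [hv'def, Function.update, dif_neg h]
            calc ‖v j‖ ≤ ‖v‖ := norm_le_pi_norm v j
            _ ≤ δ := hv
        have hmem1 : x₀ + v' ∈ Metric.closedBall x₀ δ := by
          rw [Metric.mem_closedBall]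
          have : dist (x₀ + v') x₀ = ‖v'‖ := by simp [dist_eq_norm]
          rw [this]; exact hv'le
        have hmem2 : x₀ + Pi.single i (v i) ∈ Metric.closedBall x₀ δ :=
          single_mem_ball x₀ i hvi
        have hmem3 : x₀ + (v' + Pi.single i (v i)) ∈ Metric.closedBall x₀ δ := by
          rw [← hdecomp, Metric.mem_closedBall]
          have : dist (x₀ + v) x₀ = ‖v‖ := by simp [dist_eq_norm]
          rw [this]; exact hv
        have hsum := hadd v' (Pi.single i (v i)) hmem1 hmem2 hmem3
        have hih := ih v' hv'le (by
          intro j hj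
          by_cases h : j = i
          · subst h; simp [hv'def]
          · have : j ∉ insert i s := by simp [h, hj]
            simp only [hv'def, Function.update, dif_neg h]
            exact hsupp j this)
        have hsing := hsingle i (v i) hvi
        rw [← hdecomp] at hsum
        rw [hsum, hih, hsing]
        rw [Finset.sum_insert hnotmem]
        have : ∑ j ∈ s, (v' j / δ) * (g (x₀ + Pi.single j δ) - g x₀)
            = ∑ j ∈ s, (v j / δ) * (g (x₀ + Pi.single j δ) - g x₀) := by
          apply Finset.sum_congr rfl
          intro j hj
          have h : j ≠ i := fun he => hnotmem (he ▸ hj)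
          simp [hv'def, Function.update, h]
        rw [this]; ring
    intro v hv
    exact key Finset.univ v hv (fun i hi => absurd (Finset.mem_univ i) hi)
  -- global representation
  intro x hx
  rcases le_or_gt ‖x - x₀‖ δ with hle | hgt
  · have h := hloc (x - x₀) hle
    have : x₀ + (x - x₀) = x := by abel
    rw [this] at h
    rw [h]
    congr 1
    apply Finset.sum_congr rfl
    intro i _
    simp only [Pi.sub_apply]
    ring
  · set r := ‖x - x₀‖ with hrdef
    have hr : 0 < r := lt_trans hδ hgt
    set t := δ / r with htdef
    have ht0 : 0 < t := div_pos hδ hr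
    have ht1 : t ≤ 1 := (div_le_one hr).mpr hgt.le
    have hsc := hscale (x - x₀) (by rwa [add_sub_cancel]) t ht0.le ht1
    have hnorm : ‖t • (x - x₀)‖ ≤ δ := by
      rw [norm_smul, Real.norm_eq_abs, abs_of_pos ht0, ← hrdef, htdef]
      rw [div_mul_cancel₀]
      exact hr.ne'
    have hl := hloc (t • (x - x₀)) hnorm
    rw [hsc] at hl
    have hsum : ∑ i, ((t • (x - x₀)) i / δ) * (g (x₀ + Pi.single i δ) - g x₀)
        = t * ∑ i, (((x i - x₀ i)) / δ) * (g (x₀ + Pi.single i δ) - g x₀) := by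
      rw [Finset.mul_sum]
      apply Finset.sum_congr rfl
      intro i _
      simp only [Pi.smul_apply, Pi.sub_apply, smul_eq_mul]
      ring
    rw [hsum] at hl
    have : g x = g x₀ + ∑ i, ((x i - x₀ i) / δ) * (g (x₀ + Pi.single i δ) - g x₀) := by
      have := hl
      rw [add_sub_cancel] at this
      have h2 : t * (g x - (g x₀ + ∑ i, ((x i - x₀ i) / δ) * (g (x₀ + Pi.single i δ) - g x₀))) = 0 := by
        linarith
      have h3 := (mul_eq_zero.mp h2).resolve_left ht0.ne'
      linarith
    rw [this]
    congr 1
    apply Finset.sum_congr rfl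
    intro i _
    ring


theorem stmt_7 (n m : ℕ) (K : Set ((Fin n → ℝ) × (Fin m → ℝ)))
    (hKc : IsCompact K) (hKcl : IsClosed K)
    (hconv : ∀ y : Fin m → ℝ, Convex ℝ {x : Fin n → ℝ | (x, y) ∈ K})
    (Y : Set (Fin m → ℝ)) (hY : Y = Prod.snd '' K)
    (hint : ∀ y ∈ Y, (interior {x : Fin n → ℝ | (x, y) ∈ K}).Nonempty)
    (hlhc : ∀ y ∈ Y, ∀ yk : ℕ → (Fin m → ℝ), (∀ k, yk k ∈ Y) →
      Filter.Tendsto yk Filter.atTop (nhds y) →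
      ∀ x ∈ interior {x : Fin n → ℝ | (x, y) ∈ K},
        ∃ xk : ℕ → (Fin n → ℝ),
          (∀ k, xk k ∈ interior {x : Fin n → ℝ | (x, yk k) ∈ K}) ∧
          Filter.Tendsto xk Filter.atTop (nhds x))
    (f : (Fin n → ℝ) × (Fin m → ℝ) → ℝ) (hf : ContinuousOn f K)
    (haff : ∀ (y : Fin m → ℝ) (x₁ x₂ : Fin n → ℝ), (x₁, y) ∈ K → (x₂, y) ∈ K →
      ∀ t ∈ Set.Icc (0:ℝ) 1,
        f (t • x₁ + (1 - t) • x₂, y) = t * f (x₁, y) + (1 - t) * f (x₂, y)) :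
    ∃ (c₀ : (Fin m → ℝ) → ℝ) (c : Fin n → (Fin m → ℝ) → ℝ),
      ContinuousOn c₀ Y ∧ (∀ i, ContinuousOn (c i) Y) ∧
      (∀ p ∈ K, f p = c₀ p.2 + ∑ i, c i p.2 * p.1 i) ∧
      (∀ (d₀ : (Fin m → ℝ) → ℝ) (d : Fin n → (Fin m → ℝ) → ℝ),
        (∀ p ∈ K, f p = d₀ p.2 + ∑ i, d i p.2 * p.1 i) →
        ∀ y ∈ Y, d₀ y = c₀ y ∧ ∀ i, d i y = c i y) := by
  classical
  -- choose a center and radius for each y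
  have hsel : ∀ y : Fin m → ℝ, ∃ (x₀ : Fin n → ℝ) (δ : ℝ), 0 < δ ∧
      (y ∈ Y → Metric.closedBall x₀ δ ⊆ {x : Fin n → ℝ | (x, y) ∈ K}) := by
    intro y
    by_cases hy : y ∈ Y
    · obtain ⟨x₀, hx₀⟩ := hint y hy
      have hnhds : {x : Fin n → ℝ | (x, y) ∈ K} ∈ nhds x₀ :=
        mem_interior_iff_mem_nhds.mp hx₀
      obtain ⟨ε, hε, hball⟩ := Metric.mem_nhds_iff.mp hnhds
      exact ⟨x₀, ε/2, by positivity, fun _ =>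
        (Metric.closedBall_subset_ball (by linarith)).trans hball⟩
    · exact ⟨0, 1, one_pos, fun h => absurd h hy⟩
  choose xc δc hδc hballc using hsel
  set c : Fin n → (Fin m → ℝ) → ℝ :=
    fun i y => (f (xc y + Pi.single i (δc y), y) - f (xc y, y)) / δc y with hcdef
  set c₀ : (Fin m → ℝ) → ℝ := fun y => f (xc y, y) - ∑ i, c i y * xc y i with hc₀def
  -- membership of the projections
  have hmemY : ∀ p ∈ K, p.2 ∈ Y := by
    intro p hp; rw [hY]; exact ⟨p, hp, rfl⟩
  -- the representation
  have rep : ∀ y ∈ Y, ∀ x : Fin n → ℝ, (x, y) ∈ K →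
      f (x, y) = c₀ y + ∑ i, c i y * x i := by
    intro y hy x hx
    have haff' : ∀ a b : Fin n → ℝ, a ∈ {x : Fin n → ℝ | (x, y) ∈ K} →
        b ∈ {x : Fin n → ℝ | (x, y) ∈ K} → ∀ t ∈ Set.Icc (0:ℝ) 1,
        f (t • a + (1 - t) • b, y) = t * f (a, y) + (1 - t) * f (b, y) := by
      intro a b ha hb t ht
      exact haff y a b ha hb t ht
    have h := slice_rep {x : Fin n → ℝ | (x, y) ∈ K} (fun x => f (x, y)) haff'
      (xc y) (δc y) (hδc y) (hballc y hy) x hx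
    rw [h, hc₀def]
    simp only [hcdef]
    have hsum : ∑ i, ((f (xc y + Pi.single i (δc y), y) - f (xc y, y)) / δc y) * (x i - xc y i)
        = ∑ i, ((f (xc y + Pi.single i (δc y), y) - f (xc y, y)) / δc y) * x i
          - ∑ i, ((f (xc y + Pi.single i (δc y), y) - f (xc y, y)) / δc y) * xc y i := by
      rw [← Finset.sum_sub_distrib]
      apply Finset.sum_congr rfl
      intro i _
      ring
    rw [hsum]; ring
  have repP : ∀ p ∈ K, f p = c₀ p.2 + ∑ i, c i p.2 * p.1 i := by
    intro p hp
    have := rep p.2 (hmemY p hp) p.1 (by simpa using hp)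
    simpa using this
  -- points of the closed ball are in K
  have hballK : ∀ y ∈ Y, ∀ x ∈ Metric.closedBall (xc y) (δc y), (x, y) ∈ K := by
    intro y hy x hx
    exact hballc y hy hx
  -- the sequential continuity statement
  have hseq : ∀ y ∈ Y, ∀ yk : ℕ → (Fin m → ℝ), (∀ k, yk k ∈ Y) →
      Tendsto yk atTop (nhds y) →
      Tendsto (fun k => c₀ (yk k)) atTop (nhds (c₀ y)) ∧
        ∀ i, Tendsto (fun k => c i (yk k)) atTop (nhds (c i y)) := by
    intro y hy yk hykY hykt
    obtain ⟨M₀, hM₀⟩ := hKc.exists_bound_of_continuousOn hf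
    set M : ℝ := max M₀ 0 with hMdef
    have hM : ∀ p ∈ K, |f p| ≤ M := fun p hp => (hM₀ p hp).trans (le_max_left _ _)
    have hM0 : 0 ≤ M := le_max_right _ _
    set δ : ℝ := δc y with hδdef
    have hδ : 0 < δ := hδc y
    set x₀ : Fin n → ℝ := xc y with hx₀def
    have hball : Metric.closedBall x₀ δ ⊆ {x : Fin n → ℝ | (x, y) ∈ K} := hballc y hy
    set p : Fin n → (Fin n → ℝ) := fun i => x₀ + Pi.single i (δ/2) with hpdef
    have hx₀int : x₀ ∈ interior {x : Fin n → ℝ | (x, y) ∈ K} :=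
      mem_interior.mpr ⟨Metric.ball x₀ δ, (Metric.ball_subset_closedBall).trans hball,
        Metric.isOpen_ball, Metric.mem_ball_self hδ⟩
    have hpint : ∀ i, p i ∈ interior {x : Fin n → ℝ | (x, y) ∈ K} := by
      intro i
      refine mem_interior.mpr ⟨Metric.ball x₀ δ, (Metric.ball_subset_closedBall).trans hball,
        Metric.isOpen_ball, ?_⟩
      have : dist (p i) x₀ = ‖(Pi.single i (δ/2) : Fin n → ℝ)‖ := by
        simp [hpdef, dist_eq_norm]
      rw [Metric.mem_ball, this, Pi.norm_single, Real.norm_eq_abs, abs_of_pos (by linarith)]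
      linarith
    obtain ⟨X0, hX0mem, hX0t⟩ := hlhc y hy yk hykY hykt x₀ hx₀int
    choose X hXmem hXt using fun i => hlhc y hy yk hykY hykt (p i) (hpint i)
    have hX0K : ∀ k, (X0 k, yk k) ∈ K := by
      intro k
      have h : X0 k ∈ {x : Fin n → ℝ | (x, yk k) ∈ K} := interior_subset (hX0mem k)
      exact h
    have hXK : ∀ i k, (X i k, yk k) ∈ K := by
      intro i k
      have h : X i k ∈ {x : Fin n → ℝ | (x, yk k) ∈ K} := interior_subset (hXmem i k)
      exact h
    -- difference formula
    have repdiff : ∀ (k : ℕ) (a b : Fin n → ℝ), (a, yk k) ∈ K → (b, yk k) ∈ K →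
        f (a, yk k) - f (b, yk k) = ∑ j, c j (yk k) * (a j - b j) := by
      intro k a b ha hb
      rw [rep (yk k) (hykY k) a ha, rep (yk k) (hykY k) b hb]
      have hs : ∑ j, c j (yk k) * (a j - b j)
          = ∑ j, c j (yk k) * a j - ∑ j, c j (yk k) * b j := by
        rw [← Finset.sum_sub_distrib]
        exact Finset.sum_congr rfl fun j _ => by ring
      rw [hs]; ring
    -- the error terms
    set err : Fin n → ℕ → (Fin n → ℝ) :=
      fun i k => X i k - X0 k - Pi.single i (δ/2) with herrdef
    set η : ℕ → ℝ := fun k => ∑ i, ∑ j, |err i k j| with hηdef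
    have hη0 : Tendsto η atTop (nhds 0) := by
      have : ∀ i j : Fin n, Tendsto (fun k => |err i k j|) atTop (nhds 0) := by
        intro i j
        have h1 : Tendsto (fun k => X i k j) atTop (nhds (p i j)) :=
          tendsto_pi_nhds.mp (hXt i) j
        have h2 : Tendsto (fun k => X0 k j) atTop (nhds (x₀ j)) :=
          tendsto_pi_nhds.mp hX0t j
        have h3 : Tendsto (fun k => err i k j) atTop
            (nhds (p i j - x₀ j - (Pi.single i (δ/2) : Fin n → ℝ) j)) := by
          simp only [herrdef, Pi.sub_apply]
          exact (h1.sub h2).sub tendsto_const_nhds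
        have h4 : p i j - x₀ j - (Pi.single i (δ/2) : Fin n → ℝ) j = 0 := by
          simp [hpdef]
        rw [h4] at h3
        have := h3.abs
        simpa using this
      have hsum := tendsto_finset_sum (Finset.univ : Finset (Fin n))
        (f := fun i k => ∑ j, |err i k j|) (a := fun _ => (0:ℝ))
        (fun i _ => by
          have := tendsto_finset_sum (Finset.univ : Finset (Fin n))
            (f := fun j k => |err i k j|) (a := fun _ => (0:ℝ)) (fun j _ => this i j)
          simpa using this)
      simpa using hsum
    have hηnn : ∀ k, 0 ≤ η k := by
      intro k
      apply Finset.sum_nonneg; intro i _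
      apply Finset.sum_nonneg; intro j _
      exact abs_nonneg _
    -- inner product error bound
    have herrbd : ∀ (k : ℕ) (i : Fin n) (B : ℝ), 0 ≤ B → (∀ j, |c j (yk k)| ≤ B) →
        |∑ j, c j (yk k) * err i k j| ≤ B * η k := by
      intro k i B hB hjB
      calc |∑ j, c j (yk k) * err i k j| ≤ ∑ j, |c j (yk k) * err i k j| :=
            Finset.abs_sum_le_sum_abs _ _
      _ ≤ ∑ j, B * |err i k j| := by
            apply Finset.sum_le_sum
            intro j _
            rw [abs_mul]
            exact mul_le_mul_of_nonneg_right (hjB j) (abs_nonneg _)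
      _ = B * ∑ j, |err i k j| := by rw [Finset.mul_sum]
      _ ≤ B * η k := by
            apply mul_le_mul_of_nonneg_left _ hB
            exact Finset.single_le_sum (f := fun i => ∑ j, |err i k j|)
              (fun i _ => Finset.sum_nonneg fun j _ => abs_nonneg _) (Finset.mem_univ i)
    -- eventual boundedness of coefficients
    have hCbd : ∀ᶠ k in atTop, ∀ j : Fin n, |c j (yk k)| ≤ 8 * M / δ := by
      have hev : ∀ᶠ k in atTop, η k ≤ δ/4 :=
        hη0.eventually (eventually_le_nhds (by positivity))
      filter_upwards [hev] with k hk
      intro j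
      have hne : (Finset.univ : Finset (Fin n)).Nonempty := ⟨j, Finset.mem_univ j⟩
      obtain ⟨j₀, _, hj₀⟩ := Finset.exists_max_image Finset.univ
        (fun j' => |c j' (yk k)|) hne
      have hj₀max : ∀ j' : Fin n, |c j' (yk k)| ≤ |c j₀ (yk k)| :=
        fun j' => hj₀ j' (Finset.mem_univ j')
      -- key identity
      have hkey : c j₀ (yk k) * (δ/2)
          = (f (X j₀ k, yk k) - f (X0 k, yk k)) - ∑ j', c j' (yk k) * err j₀ k j' := by
        rw [repdiff k (X j₀ k) (X0 k) (hXK j₀ k) (hX0K k)]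
        have hdec : ∀ j', X j₀ k j' - X0 k j'
            = err j₀ k j' + (Pi.single j₀ (δ/2) : Fin n → ℝ) j' := by
          intro j'; simp [herrdef]
        have : ∑ j', c j' (yk k) * (X j₀ k j' - X0 k j')
            = ∑ j', c j' (yk k) * err j₀ k j'
              + ∑ j', c j' (yk k) * (Pi.single j₀ (δ/2) : Fin n → ℝ) j' := by
          rw [← Finset.sum_add_distrib]
          apply Finset.sum_congr rfl
          intro j' _
          rw [hdec j']; ring
        rw [this]
        have hsing : ∑ j', c j' (yk k) * (Pi.single j₀ (δ/2) : Fin n → ℝ) j' = c j₀ (yk k) * (δ/2) := by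
          rw [Finset.sum_eq_single j₀]
          · simp
          · intro b _ hb; simp [Pi.single_apply, hb]
          · intro h; exact absurd (Finset.mem_univ j₀) h
        rw [hsing]; ring
      have hfb : |f (X j₀ k, yk k) - f (X0 k, yk k)| ≤ 2 * M := by
        calc |f (X j₀ k, yk k) - f (X0 k, yk k)|
            ≤ |f (X j₀ k, yk k)| + |f (X0 k, yk k)| := abs_sub _ _
        _ ≤ M + M := add_le_add (hM _ (hXK j₀ k)) (hM _ (hX0K k))
        _ = 2 * M := by ring
      have herr : |∑ j', c j' (yk k) * err j₀ k j'| ≤ |c j₀ (yk k)| * η k :=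
        herrbd k j₀ (|c j₀ (yk k)|) (abs_nonneg _) hj₀max
      have hineq : |c j₀ (yk k)| * (δ/2) ≤ 2 * M + |c j₀ (yk k)| * (δ/4) := by
        calc |c j₀ (yk k)| * (δ/2) = |c j₀ (yk k) * (δ/2)| := by
              rw [abs_mul, abs_of_pos (by linarith : (0:ℝ) < δ/2)]
        _ ≤ |f (X j₀ k, yk k) - f (X0 k, yk k)| + |∑ j', c j' (yk k) * err j₀ k j'| := by
              rw [hkey]; exact abs_sub _ _
        _ ≤ 2 * M + |c j₀ (yk k)| * η k := add_le_add hfb herr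
        _ ≤ 2 * M + |c j₀ (yk k)| * (δ/4) :=
              add_le_add_right (mul_le_mul_of_nonneg_left hk (abs_nonneg _)) _
      have hj₀bd : |c j₀ (yk k)| ≤ 8 * M / δ := by
        rw [le_div_iff₀ hδ]
        nlinarith [hineq]
      exact (hj₀max j).trans hj₀bd
    -- convergence of c i
    have hfconv : ∀ (x : Fin n → ℝ) (Z : ℕ → (Fin n → ℝ)), (x, y) ∈ K →
        (∀ k, (Z k, yk k) ∈ K) → Tendsto Z atTop (nhds x) →
        Tendsto (fun k => f (Z k, yk k)) atTop (nhds (f (x, y))) := by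
      intro x Z hx hZ hZt
      have htp : Tendsto (fun k => (Z k, yk k)) atTop (nhdsWithin (x, y) K) := by
        rw [tendsto_nhdsWithin_iff]
        exact ⟨(hZt.prodMk_nhds hykt), Filter.Eventually.of_forall hZ⟩
      exact (hf (x, y) hx).tendsto.comp htp
    have hlim_i : ∀ i, f (p i, y) - f (x₀, y) = c i y * (δ/2) := by
      intro i
      have hpik : (p i, y) ∈ K := hball (by
        have : dist (p i) x₀ = ‖(Pi.single i (δ/2) : Fin n → ℝ)‖ := by
          simp [hpdef, dist_eq_norm]
        rw [Metric.mem_closedBall, this, Pi.norm_single, Real.norm_eq_abs,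
          abs_of_pos (by linarith : (0:ℝ) < δ/2)]
        linarith)
      have hx₀k : (x₀, y) ∈ K := hball (Metric.mem_closedBall_self hδ.le)
      rw [rep y hy (p i) hpik, rep y hy x₀ hx₀k]
      have : ∑ j, c j y * p i j - ∑ j, c j y * x₀ j = ∑ j, c j y * (Pi.single i (δ/2) : Fin n → ℝ) j := by
        rw [← Finset.sum_sub_distrib]
        apply Finset.sum_congr rfl
        intro j _
        simp only [hpdef, Pi.add_apply]
        ring
      have hsing : ∑ j, c j y * (Pi.single i (δ/2) : Fin n → ℝ) j = c i y * (δ/2) := by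
        rw [Finset.sum_eq_single i]
        · simp
        · intro b _ hb; simp [Pi.single_apply, hb]
        · intro h; exact absurd (Finset.mem_univ i) h
      rw [show c₀ y + ∑ j, c j y * p i j - (c₀ y + ∑ j, c j y * x₀ j)
          = ∑ j, c j y * p i j - ∑ j, c j y * x₀ j from by ring, this, hsing]
    have hci : ∀ i, Tendsto (fun k => c i (yk k)) atTop (nhds (c i y)) := by
      intro i
      -- identity : c i (yk k) * (δ/2) = f-diff - error
      have hid : ∀ k, c i (yk k) * (δ/2)
          = (f (X i k, yk k) - f (X0 k, yk k)) - ∑ j', c j' (yk k) * err i k j' := by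
        intro k
        rw [repdiff k (X i k) (X0 k) (hXK i k) (hX0K k)]
        have : ∑ j', c j' (yk k) * (X i k j' - X0 k j')
            = ∑ j', c j' (yk k) * err i k j'
              + ∑ j', c j' (yk k) * (Pi.single i (δ/2) : Fin n → ℝ) j' := by
          rw [← Finset.sum_add_distrib]
          apply Finset.sum_congr rfl
          intro j' _
          have : X i k j' - X0 k j' = err i k j' + (Pi.single i (δ/2) : Fin n → ℝ) j' := by
            simp [herrdef]
          rw [this]; ring
        rw [this]
        have hsing : ∑ j', c j' (yk k) * (Pi.single i (δ/2) : Fin n → ℝ) j' = c i (yk k) * (δ/2) := by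
          rw [Finset.sum_eq_single i]
          · simp
          · intro b _ hb; simp [Pi.single_apply, hb]
          · intro h; exact absurd (Finset.mem_univ i) h
        rw [hsing]; ring
      -- error tends to zero
      have herr0 : Tendsto (fun k => ∑ j', c j' (yk k) * err i k j') atTop (nhds 0) := by
        have habs : Tendsto (fun k => |∑ j', c j' (yk k) * err i k j'|) atTop (nhds 0) := by
          apply squeeze_zero' (Filter.Eventually.of_forall fun k => abs_nonneg _)
          · filter_upwards [hCbd] with k hk
            exact herrbd k i (8 * M / δ) (by positivity) hk
          · have := hη0.const_mul (8 * M / δ)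
            simpa using this
        exact tendsto_zero_iff_abs_tendsto_zero _ |>.mpr habs
      -- f-difference converges
      have hfd : Tendsto (fun k => f (X i k, yk k) - f (X0 k, yk k)) atTop
          (nhds (f (p i, y) - f (x₀, y))) := by
        have hpik : (p i, y) ∈ K := hball (by
          have : dist (p i) x₀ = ‖(Pi.single i (δ/2) : Fin n → ℝ)‖ := by
            simp [hpdef, dist_eq_norm]
          rw [Metric.mem_closedBall, this, Pi.norm_single, Real.norm_eq_abs,
            abs_of_pos (by linarith : (0:ℝ) < δ/2)]
          linarith)
        have hx₀k : (x₀, y) ∈ K := hball (Metric.mem_closedBall_self hδ.le)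
        exact (hfconv (p i) (X i) hpik (hXK i) (hXt i)).sub
          (hfconv x₀ X0 hx₀k hX0K hX0t)
      have hmain : Tendsto (fun k => c i (yk k) * (δ/2)) atTop (nhds (c i y * (δ/2))) := by
        have heq : (fun k => c i (yk k) * (δ/2))
            = fun k => (f (X i k, yk k) - f (X0 k, yk k)) - ∑ j', c j' (yk k) * err i k j' :=
          funext hid
        rw [heq, ← hlim_i i]
        have := hfd.sub herr0
        simpa using this
      have := hmain.mul_const (2/δ)
      have heq1 : (fun k => c i (yk k) * (δ/2) * (2/δ)) = fun k => c i (yk k) := by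
        funext k; field_simp
      have heq2 : c i y * (δ/2) * (2/δ) = c i y := by field_simp
      rw [heq1, heq2] at this
      exact this
    constructor
    · -- c₀ convergence
      have hid0 : ∀ k, c₀ (yk k) = f (X0 k, yk k) - ∑ j, c j (yk k) * X0 k j := by
        intro k
        have := rep (yk k) (hykY k) (X0 k) (hX0K k)
        linarith [this]
      have heq : (fun k => c₀ (yk k))
          = fun k => f (X0 k, yk k) - ∑ j, c j (yk k) * X0 k j := funext hid0
      rw [heq]
      have hx₀k : (x₀, y) ∈ K := hball (Metric.mem_closedBall_self hδ.le)
      have hfc : Tendsto (fun k => f (X0 k, yk k)) atTop (nhds (f (x₀, y))) :=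
        hfconv x₀ X0 hx₀k hX0K hX0t
      have hsc : Tendsto (fun k => ∑ j, c j (yk k) * X0 k j) atTop
          (nhds (∑ j, c j y * x₀ j)) := by
        apply tendsto_finset_sum
        intro j _
        exact (hci j).mul (tendsto_pi_nhds.mp hX0t j)
      have := hfc.sub hsc
      have hc₀y : c₀ y = f (x₀, y) - ∑ j, c j y * x₀ j := rfl
      rw [hc₀y]
      exact this
    · exact hci
  -- sequential continuity ⇒ ContinuousOn
  have hcont : ∀ (g : (Fin m → ℝ) → ℝ),
      (∀ y ∈ Y, ∀ yk : ℕ → (Fin m → ℝ), (∀ k, yk k ∈ Y) → Tendsto yk atTop (nhds y) →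
        Tendsto (fun k => g (yk k)) atTop (nhds (g y))) → ContinuousOn g Y := by
    intro g hg
    intro y hy
    rw [ContinuousWithinAt]
    rw [Filter.tendsto_iff_seq_tendsto]
    intro u hu
    have humem : ∀ᶠ k in atTop, u k ∈ Y := eventually_mem_of_tendsto_nhdsWithin hu
    have hut : Tendsto u atTop (nhds y) := hu.mono_right nhdsWithin_le_nhds
    set u' : ℕ → (Fin m → ℝ) := fun k => if u k ∈ Y then u k else y with hu'def
    have hu'Y : ∀ k, u' k ∈ Y := by
      intro k
      simp only [hu'def]
      split
      · assumption
      · exact hy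
    have hu'eq : u' =ᶠ[atTop] u := by
      filter_upwards [humem] with k hk
      simp [hu'def, hk]
    have hu't : Tendsto u' atTop (nhds y) := hut.congr' hu'eq.symm
    have := hg y hy u' hu'Y hu't
    exact this.congr' (hu'eq.mono fun k hk => by simp [Function.comp, hk])
  refine ⟨c₀, c, ?_, ?_, repP, ?_⟩
  · exact hcont c₀ fun y hy yk h1 h2 => (hseq y hy yk h1 h2).1
  · intro i
    exact hcont (c i) fun y hy yk h1 h2 => (hseq y hy yk h1 h2).2 i
  · -- uniqueness
    intro d₀ d hd y hy
    have hbally := hballc y hy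
    have hδ := hδc y
    have hq0 : ((xc y, y) : (Fin n → ℝ) × (Fin m → ℝ)) ∈ K :=
      hbally (Metric.mem_closedBall_self hδ.le)
    have hqi : ∀ i, ((xc y + Pi.single i (δc y), y) : (Fin n → ℝ) × (Fin m → ℝ)) ∈ K :=
      fun i => hbally (single_mem_ball (xc y) i (by rw [abs_of_pos hδ]))
    have e2 := hd _ hq0
    have e2' := repP _ hq0
    dsimp only at e2 e2'
    have hdi : ∀ i, d i y = c i y := by
      intro i
      have e1 := hd _ (hqi i)
      have e1' := repP _ (hqi i)
      dsimp only at e1 e1'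
      have hdsum : ∑ j, d j y * ((xc y + Pi.single i (δc y) : Fin n → ℝ)) j
          = ∑ j, d j y * xc y j + d i y * δc y := by
        have h1 : ∑ j, d j y * ((xc y + Pi.single i (δc y) : Fin n → ℝ)) j
            = ∑ j, (d j y * xc y j + d j y * (Pi.single i (δc y) : Fin n → ℝ) j) := by
          apply Finset.sum_congr rfl
          intro j _
          simp only [Pi.add_apply]
          ring
        rw [h1, Finset.sum_add_distrib, sum_single_mul]
      have hcsum : ∑ j, c j y * ((xc y + Pi.single i (δc y) : Fin n → ℝ)) j
          = ∑ j, c j y * xc y j + c i y * δc y := by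
        have h1 : ∑ j, c j y * ((xc y + Pi.single i (δc y) : Fin n → ℝ)) j
            = ∑ j, (c j y * xc y j + c j y * (Pi.single i (δc y) : Fin n → ℝ) j) := by
          apply Finset.sum_congr rfl
          intro j _
          simp only [Pi.add_apply]
          ring
        rw [h1, Finset.sum_add_distrib, sum_single_mul]
      rw [hdsum] at e1
      rw [hcsum] at e1'
      have : d i y * δc y = c i y * δc y := by linarith
      exact mul_right_cancel₀ hδ.ne' this
    refine ⟨?_, hdi⟩
    have hsums : ∑ j, d j y * xc y j = ∑ j, c j y * xc y j := by
      apply Finset.sum_congr rfl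
      intro j _
      rw [hdi j]
    rw [hsums] at e2
    linarith
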